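/- Let U be an irreducible AUD transition matrix on a finite or infinite rooted locally finite tree T, and let π be its h-invariant measure. Then for every node u ≠ ∅, π(u) · U(u, p(u)) = ∑_{v ∈ [[∅,p(u)]]} π(v) · U(v, T_u), where U(v, T_u) = ∑_{w ∈ T_u} U(v, w). -/

import Mathlib

open scoped BigOperators ENNReal

/-- Nodes of trees are finite words over `ℕ`; the root is the empty word. -/
abbrev Word : Type := List ℕ

/-- The parent of a node: the word with its last letter removed. -/
def par (u : Word) : Word := u.dropLast

/-- A rooted locally finite tree: a set of words containing the root, closed
under prefixes, in which every node has finitely many children. -/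
def IsTree (T : Set Word) : Prop :=
  ([] : Word) ∈ T ∧
  (∀ u ∈ T, ∀ v : Word, v <+: u → v ∈ T) ∧
  (∀ u ∈ T, {i : ℕ | u ++ [i] ∈ T}.Finite)

/-- `desc T u` is the set of descendants of `u` in `T` (the subtree `T_u`). -/
def desc (T : Set Word) (u : Word) : Set Word := {w | w ∈ T ∧ u <+: w}

/-- The children of `u` in `T`. -/
def children (T : Set Word) (u : Word) : Set Word := {v | v ∈ T ∧ ∃ i : ℕ, v = u ++ [i]}

/-- A transition matrix on `T`: nonnegative entries, rows summing to 1 over `T`. -/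
def IsTransMatrix (T : Set Word) (U : Word → Word → ℝ) : Prop :=
  (∀ u ∈ T, ∀ v ∈ T, 0 ≤ U u v) ∧ ∀ u ∈ T, HasSum (fun v : T => U u (v : Word)) 1

/-- Almost upper-directed: positive transitions go to the parent or to a descendant. -/
def IsAUD (T : Set Word) (U : Word → Word → ℝ) : Prop :=
  ∀ u ∈ T, ∀ v ∈ T, 0 < U u v → v = par u ∨ v ∈ desc T u

/-- Almost lower-directed: positive transitions go to a child or to an ancestor. -/
def IsALD (T : Set Word) (D : Word → Word → ℝ) : Prop :=
  ∀ u ∈ T, ∀ v ∈ T, 0 < D u v → v ∈ children T u ∨ v <+: u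

/-- Random-walk transition matrix: positive transitions go to `u`, its parent or a child. -/
def IsRW (T : Set Word) (M : Word → Word → ℝ) : Prop :=
  ∀ u ∈ T, ∀ v ∈ T, 0 < M u v → v = u ∨ v = par u ∨ v ∈ children T u

/-- Irreducibility: any node can be reached from any other by positive transitions. -/
def IrreducibleOn (T : Set Word) (U : Word → Word → ℝ) : Prop :=
  ∀ u ∈ T, ∀ v ∈ T, ∃ (n : ℕ) (x : ℕ → Word),
    x 0 = u ∧ x n = v ∧ (∀ k ≤ n, x k ∈ T) ∧ ∀ k < n, 0 < U (x k) (x (k + 1))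

/-- The weight of a path (a list of nodes): product of the transitions along it. -/
def wgt (U : Word → Word → ℝ) : List Word → ℝ
  | x :: y :: rest => U x y * wgt U (y :: rest)
  | _ => 1

/-- A first-return loop at the root. -/
def IsLoop (T : Set Word) (γ : List Word) : Prop :=
  2 ≤ γ.length ∧ γ.head? = some ([] : Word) ∧ γ.getLast? = some ([] : Word) ∧
  (∀ x ∈ γ, x ∈ T) ∧
  ∀ k, 0 < k → k < γ.length - 1 → γ.getD k [] ≠ ([] : Word)

/-- The total weight of first-return loops at the root. -/
noncomputable def loopSum (T : Set Word) (U : Word → Word → ℝ) : ℝ :=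
  ∑' γ : {γ : List Word // IsLoop T γ}, wgt U γ.1

/-- Recurrence: the total weight of first-return loops at the root is 1. -/
def Recurrent (T : Set Word) (U : Word → Word → ℝ) : Prop := loopSum T U = 1

/-- Expected return time to the root. -/
noncomputable def returnTime (T : Set Word) (U : Word → Word → ℝ) : ℝ≥0∞ :=
  ∑' γ : {γ : List Word // IsLoop T γ},
    ((γ.1.length - 1 : ℕ) : ℝ≥0∞) * ENNReal.ofReal (wgt U γ.1)

/-- Positive recurrence: recurrent with finite expected return time. -/
def PosRecurrent (T : Set Word) (U : Word → Word → ℝ) : Prop :=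
  Recurrent T U ∧ returnTime T U < ⊤

/-- `descWeight T U a b = U(a, T_b)`, the total weight from `a` into the subtree `T_b`. -/
noncomputable def descWeight (T : Set Word) (U : Word → Word → ℝ) (a b : Word) : ℝ :=
  ∑' w : desc T b, U a (w : Word)

/-- The matrix `(Id - ᵘU)^{(u)}`: rows/columns indexed by the strict prefixes of `u`
(the prefix of length `i` corresponds to the index `i`), the column of `u` removed. -/
noncomputable def hMat (T : Set Word) (U : Word → Word → ℝ) (u : Word) :
    Matrix (Fin u.length) (Fin u.length) ℝ :=
  Matrix.of fun i j =>
    (if i = j then 1 else 0) -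
      (if (i : ℕ) ≤ (j : ℕ) + 1 then
        descWeight T U (u.take i) (u.take j) - descWeight T U (u.take i) (u.take ((j : ℕ) + 1))
       else 0)

/-- The h-invariant measure `π` of an AUD transition matrix, with `π(∅) = 1`:
`π(u) = det((Id - ᵘU)^{(u)}) / ∏_{∅ ≠ v ⪯ u} U(v, p(v))`. -/
noncomputable def hInv (T : Set Word) (U : Word → Word → ℝ) (u : Word) : ℝ :=
  (hMat T U u).det / ∏ k ∈ Finset.range u.length, U (u.take (k + 1)) (u.take k)

/-- Paths from `i` to the root whose interior stays away from the root and below height `b`. -/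
def IsEscape (T : Set Word) (i : Word) (b : ℕ) (γ : List Word) : Prop :=
  2 ≤ γ.length ∧ γ.head? = some i ∧ γ.getLast? = some ([] : Word) ∧
  (∀ x ∈ γ, x ∈ T) ∧
  ∀ k, 0 < k → k < γ.length - 1 → γ.getD k [] ≠ ([] : Word) ∧ (γ.getD k []).length < b

/-- `qval T U i b`: total weight of paths from `i` to the root staying away from the
root and below height `b` in their interior. -/
noncomputable def qval (T : Set Word) (U : Word → Word → ℝ) (i : Word) (b : ℕ) : ℝ :=
  ∑' γ : {γ : List Word // IsEscape T i b γ}, wgt U γ.1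

/-- An end of a tree: an infinite injective path starting at the root. -/
def IsEnd (T : Set Word) (p : ℕ → Word) : Prop :=
  p 0 = [] ∧ ∀ k, p (k + 1) ∈ children T (p k)

/-- `T^𝕡`: the nodes of the end `𝕡` together with the finite subtrees hanging from
its neighbors. -/
def endTree (T : Set Word) (p : ℕ → Word) : Set Word :=
  Set.range p ∪
    {v | v ∈ T ∧ ∃ w ∈ T, w <+: v ∧ w ∉ Set.range p ∧ par w ∈ Set.range p ∧ (desc T w).Finite}

/-- `projTo T p w v`: the projection `℘_𝕡` sends `w` to `v` (fixing `T^𝕡`, and sending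
any other node to its highest ancestor on `𝕡`). -/
def projTo (T : Set Word) (p : ℕ → Word) (w v : Word) : Prop :=
  (w ∈ endTree T p ∧ v = w) ∨
  (w ∉ endTree T p ∧ v ∈ Set.range p ∧ v <+: w ∧
    ∀ v' ∈ Set.range p, v' <+: w → v' <+: v)

/-- The projected transition matrix `U^𝕡` on `T^𝕡`. -/
noncomputable def projMat (T : Set Word) (p : ℕ → Word) (U : Word → Word → ℝ)
    (u v : Word) : ℝ :=
  ∑' w : {w : Word // w ∈ T ∧ projTo T p w v}, U u (w : Word)

/-- Longest common prefix of two words. -/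
def lcp : Word → Word → Word
  | a :: as, b :: bs => if a = b then a :: lcp as bs else []
  | _, _ => []

/-- Graph distance on the tree. -/
def treeDist (u v : Word) : ℕ :=
  (u.length - (lcp u v).length) + (v.length - (lcp u v).length)

/-- A first-return path from `w` to the set `B`. -/
def IsReturnPath (T : Set Word) (B : Set Word) (w : Word) (γ : List Word) : Prop :=
  2 ≤ γ.length ∧ γ.head? = some w ∧ (∀ x ∈ γ, x ∈ T) ∧
  (∀ k, 0 < k → k < γ.length - 1 → γ.getD k [] ∉ B) ∧
  ∃ z ∈ B, γ.getLast? = some z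

open Classical in
/-- `expReturn T U B w`: the expected first-return time from `w` to `B`, set to `∞`
when return to `B` is not almost sure. -/
noncomputable def expReturn (T : Set Word) (U : Word → Word → ℝ) (B : Set Word)
    (w : Word) : ℝ≥0∞ :=
  if (∑' γ : {γ : List Word // IsReturnPath T B w γ}, wgt U γ.1) = 1 then
    ∑' γ : {γ : List Word // IsReturnPath T B w γ},
      ((γ.1.length - 1 : ℕ) : ℝ≥0∞) * ENNReal.ofReal (wgt U γ.1)
  else ⊤

/-- `P(T)`: nodes with infinitely many descendants (union of the ends of `T`). -/
def Ptree (T : Set Word) : Set Word := {u | u ∈ T ∧ (desc T u).Infinite}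

/-- `Q(T) = 1 + ∑_{u ∈ P(T)} (|c_{P(T)}(u)| - 1)`, valued in `ℝ≥0∞`. -/
noncomputable def Qval (T : Set Word) : ℝ≥0∞ :=
  1 + ∑' u : Ptree T, (((children (Ptree T) (u : Word)).ncard - 1 : ℕ) : ℝ≥0∞)

/-- Complex version of `hMat`, with `λ` on the diagonal: `(λ·Id - ᵘU)^{(u)}`. -/
noncomputable def hMatC (T : Set Word) (U : Word → Word → ℝ) (lam : ℂ) (u : Word) :
    Matrix (Fin u.length) (Fin u.length) ℂ :=
  Matrix.of fun i j =>
    (if i = j then lam else 0) -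
      (if (i : ℕ) ≤ (j : ℕ) + 1 then
        ((descWeight T U (u.take i) (u.take j) : ℝ) : ℂ) -
          ((descWeight T U (u.take i) (u.take ((j : ℕ) + 1)) : ℝ) : ℂ)
       else 0)

/-- `π^{(λ)}(u) = det((λ·Id - ᵘU)^{(u)}) / ∏_{∅ ≠ v ⪯ u} U(v, p(v))`. -/
noncomputable def piLam (T : Set Word) (U : Word → Word → ℝ) (lam : ℂ) (u : Word) : ℂ :=
  (hMatC T U lam u).det /
    ∏ k ∈ Finset.range u.length, ((U (u.take (k + 1)) (u.take k) : ℝ) : ℂ)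

/-- The measure `π̄` of a random walk: `π̄(u) = ∏_j M(u[j-1],u[j]) / M(u[j],u[j-1])`. -/
noncomputable def rwInv (M : Word → Word → ℝ) (u : Word) : ℝ :=
  ∏ k ∈ Finset.range u.length, (M (u.take k) (u.take (k + 1)) / M (u.take (k + 1)) (u.take k))

section Aux

variable {T : Set Word} {U : Word → Word → ℝ}

lemma aux_par_prefix (v : Word) : par v <+: v := List.dropLast_prefix v

lemma aux_par_mem (hT : IsTree T) {v : Word} (hv : v ∈ T) : par v ∈ T :=
  hT.2.1 v hv (par v) (aux_par_prefix v)

lemma aux_take_mem (hT : IsTree T) {v : Word} (hv : v ∈ T) (m : ℕ) : v.take m ∈ T :=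
  hT.2.1 v hv (v.take m) (List.take_prefix m v)

lemma aux_par_not_desc {v : Word} (hv : v ≠ []) : par v ∉ desc T v := by
  rintro ⟨-, hpre⟩
  have h1 := hpre.length_le
  have h2 : (par v).length = v.length - 1 := List.length_dropLast
  have h3 : 0 < v.length := List.length_pos_iff.mpr hv
  omega

lemma aux_desc_mono {v w : Word} (h : v <+: w) : desc T w ⊆ desc T v :=
  fun x hx => ⟨hx.1, h.trans hx.2⟩

lemma aux_zero_off (hM : IsTransMatrix T U) (hA : IsAUD T U) {v w : Word}
    (hv : v ∈ T) (hw : w ∈ T) (h1 : w ≠ par v) (h2 : w ∉ desc T v) : U v w = 0 := by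
  refine le_antisymm ?_ (hM.1 v hv w hw)
  by_contra hlt
  rcases hA v hv w hw (lt_of_not_ge hlt) with h | h
  · exact h1 h
  · exact h2 h

lemma aux_summable_ind (hM : IsTransMatrix T U) {a : Word} (ha : a ∈ T)
    (s : Set Word) (hs : s ⊆ T) : Summable (s.indicator (U a)) := by
  have h1 : HasSum (T.indicator (U a)) 1 :=
    hasSum_subtype_iff_indicator.mp (hM.2 a ha)
  have h2 : s.indicator (U a) = s.indicator (T.indicator (U a)) := by
    funext w
    by_cases hw : w ∈ s
    · simp [Set.indicator_of_mem hw, Set.indicator_of_mem (hs hw)]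
    · simp [Set.indicator_of_notMem hw]
  rw [h2]
  exact h1.summable.indicator s

lemma aux_descWeight_eq (a b : Word) :
    descWeight T U a b = ∑' w, (desc T b).indicator (U a) w := tsum_subtype _ _

lemma aux_ind_eq1 (hT : IsTree T) (hM : IsTransMatrix T U) (hA : IsAUD T U)
    {v : Word} (hv : v ∈ T) (hvne : v ≠ []) :
    T.indicator (U v) = (desc T (par v)).indicator (U v) := by
  funext w
  by_cases hw : w ∈ desc T (par v)
  · rw [Set.indicator_of_mem hw, Set.indicator_of_mem hw.1]
  · rw [Set.indicator_of_notMem hw]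
    by_cases hwT : w ∈ T
    · rw [Set.indicator_of_mem hwT]
      refine aux_zero_off hM hA hv hwT ?_ ?_
      · rintro rfl
        exact hw ⟨aux_par_mem hT hv, List.prefix_refl _⟩
      · intro hd
        exact hw (aux_desc_mono (aux_par_prefix v) hd)
    · rw [Set.indicator_of_notMem hwT]

lemma aux_ind_eq2 (hM : IsTransMatrix T U) (hA : IsAUD T U)
    {v : Word} (hv : v ∈ T) (hvne : v ≠ []) :
    (fun w => if w = par v then 0 else T.indicator (U v) w) =
      (desc T v).indicator (U v) := by
  funext w
  by_cases hw : w = par v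
  · rw [if_pos hw, Set.indicator_of_notMem (hw ▸ aux_par_not_desc hvne)]
  · rw [if_neg hw]
    by_cases hd : w ∈ desc T v
    · rw [Set.indicator_of_mem hd, Set.indicator_of_mem hd.1]
    · rw [Set.indicator_of_notMem hd]
      by_cases hwT : w ∈ T
      · rw [Set.indicator_of_mem hwT]
        exact aux_zero_off hM hA hv hwT hw hd
      · rw [Set.indicator_of_notMem hwT]

/-- `U(v, p(v)) + U(v, T_v) = 1` for `v ≠ ∅`. -/
lemma aux_AL2 (hT : IsTree T) (hM : IsTransMatrix T U) (hA : IsAUD T U)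
    {v : Word} (hv : v ∈ T) (hvne : v ≠ []) :
    U v (par v) + descWeight T U v v = 1 := by
  classical
  have h1 : HasSum (T.indicator (U v)) 1 :=
    hasSum_subtype_iff_indicator.mp (hM.2 v hv)
  have h2 := Summable.tsum_eq_add_tsum_ite h1.summable (par v)
  rw [h1.tsum_eq] at h2
  rw [Set.indicator_of_mem (aux_par_mem hT hv)] at h2
  have h3 : ∑' w, (if w = par v then 0 else T.indicator (U v) w) =
      descWeight T U v v := by
    rw [aux_ind_eq2 hM hA hv hvne, ← aux_descWeight_eq]
  rw [h3] at h2
  exact h2.symm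

/-- `U(v, T_{p(v)}) = 1` for `v ≠ ∅`. -/
lemma aux_AL1 (hT : IsTree T) (hM : IsTransMatrix T U) (hA : IsAUD T U)
    {v : Word} (hv : v ∈ T) (hvne : v ≠ []) :
    descWeight T U v (par v) = 1 := by
  rw [aux_descWeight_eq, ← aux_ind_eq1 hT hM hA hv hvne]
  exact (hasSum_subtype_iff_indicator.mp (hM.2 v hv)).tsum_eq

/-- `U(∅, T) = 1`. -/
lemma aux_AL3 (hT : IsTree T) (hM : IsTransMatrix T U) :
    descWeight T U ([] : Word) ([] : Word) = 1 := by
  have hset : desc T ([] : Word) = T := by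
    ext w
    exact ⟨fun h => h.1, fun h => ⟨h, List.nil_prefix⟩⟩
  rw [descWeight, hset]
  exact (hM.2 [] hT.1).tsum_eq

end Aux

section Aux2

variable {T : Set Word} {U : Word → Word → ℝ}

lemma aux_prefix_dropLast {v w : Word} (h : v <+: w) (hne : v ≠ w) :
    v <+: w.dropLast := by
  obtain ⟨t, rfl⟩ := h
  have ht : t ≠ [] := by rintro rfl; simp at hne
  rw [List.dropLast_append_of_ne_nil ht]
  exact ⟨t.dropLast, rfl⟩

/-- Irreducibility of an AUD matrix forces positive transition to the parent. -/
lemma aux_pos_par (hT : IsTree T) (hA : IsAUD T U) (hI : IrreducibleOn T U)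
    {v : Word} (hv : v ∈ T) (hvne : v ≠ []) : 0 < U v (par v) := by
  classical
  obtain ⟨n, x, h0, hn, hmem, hpos⟩ := hI v hv [] hT.1
  have hex : ∃ k, k ≤ n ∧ x k ∉ desc T v := by
    refine ⟨n, le_refl n, ?_⟩
    rw [hn]
    rintro ⟨-, hpre⟩
    exact hvne (List.prefix_nil.mp hpre)
  set k := Nat.find hex with hk
  obtain ⟨hkn, hknd⟩ := Nat.find_spec hex
  rw [← hk] at hkn hknd
  have hk0 : k ≠ 0 := by
    intro h
    rw [h, h0] at hknd
    exact hknd ⟨hv, List.prefix_refl v⟩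
  have hprev : x (k - 1) ∈ desc T v := by
    by_contra hc
    have := Nat.find_min hex (m := k - 1) (by omega)
    exact this ⟨by omega, hc⟩
  have hstep : 0 < U (x (k - 1)) (x k) := by
    have h := hpos (k - 1) (by omega)
    rwa [show k - 1 + 1 = k by omega] at h
  have hxk1T : x (k - 1) ∈ T := hmem (k - 1) (by omega)
  have hxkT : x k ∈ T := hmem k hkn
  rcases hA (x (k - 1)) hxk1T (x k) hxkT hstep with hpar | hdesc
  · have hxv : x (k - 1) = v := by
      by_contra hne
      apply hknd
      refine ⟨hxkT, ?_⟩
      rw [hpar]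
      exact aux_prefix_dropLast hprev.2 (fun h => hne h.symm)
    rw [hxv] at hpar hstep
    rwa [← hpar]
  · exact absurd ⟨hxkT, hprev.2.trans hdesc.2⟩ hknd

lemma aux_take_ne_nil {u : Word} {m : ℕ} (hm : 1 ≤ m) (hmn : m ≤ u.length) :
    u.take m ≠ [] := by
  intro h
  have := congrArg List.length h
  simp only [List.length_take, List.length_nil] at this
  omega

lemma aux_par_take {u : Word} {m : ℕ} (hm : 1 ≤ m) (hmn : m ≤ u.length) :
    par (u.take m) = u.take (m - 1) := by
  rw [par, List.dropLast_eq_take, List.length_take, List.take_take]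
  congr 1
  omega

lemma aux_tele (F : ℕ → ℝ) (i : ℕ) (j : ℕ) :
    ∑ k ∈ Finset.range (j + 1), (if i ≤ k + 1 then F k - F (k + 1) else 0) =
      if i ≤ j + 1 then F (i - 1) - F (j + 1) else 0 := by
  induction j with
  | zero =>
      rcases le_or_gt i 1 with h | h
      · rw [Finset.sum_range_one, if_pos h, if_pos h]
        congr 2
        omega
      · rw [Finset.sum_range_one, if_neg (by omega), if_neg (by omega)]
  | succ j ih =>
      rw [Finset.sum_range_succ, ih]
      split_ifs with h1 h2 h3
      · ring
      · omega
      · have : i - 1 = j + 1 := by omega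
        rw [this]; ring
      · simp

lemma aux_delta (i j : ℕ) :
    ∑ k ∈ Finset.range (j + 1), (if i = k then (1 : ℝ) else 0) =
      if i ≤ j then 1 else 0 := by
  rw [Finset.sum_ite_eq]
  simp [Nat.lt_succ_iff]

end Aux2


noncomputable def Gmat (c : ℕ → ℝ) (g : ℕ → ℕ → ℝ) (m : ℕ) : Matrix (Fin m) (Fin m) ℝ :=
  Matrix.of fun i j =>
    if (j : ℕ) + 1 < (i : ℕ) then 0
    else if (j : ℕ) + 1 = (i : ℕ) then -c j else g i ((j : ℕ) + 1)

lemma Gmat_det_update (c : ℕ → ℝ) (g : ℕ → ℕ → ℝ) :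
    ∀ m (φ : ℕ → ℝ),
      ((Gmat c g (m + 1)).updateCol (Fin.last m) (fun i => φ (i : ℕ))).det =
        ∑ k ∈ Finset.range (m + 1),
          φ k * (Gmat c g k).det * ∏ j ∈ Finset.Ico k m, c j := by
  intro m
  induction m with
  | zero =>
      intro φ
      simp [Matrix.det_fin_one, Matrix.updateCol_apply]
  | succ m ih =>
      intro φ
      set M := (Gmat c g (m + 2)).updateCol (Fin.last (m + 1)) (fun i => φ (i : ℕ)) with hM
      have hexp := Matrix.det_succ_row M (Fin.last (m + 1))
      -- row entries
      have hrow : ∀ j : Fin (m + 2), M (Fin.last (m + 1)) j =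
          if (j : ℕ) = m + 1 then φ (m + 1) else if (j : ℕ) = m then -c m else 0 := by
        intro j
        simp only [hM, Matrix.updateCol_apply, Gmat, Matrix.of_apply]
        rcases eq_or_ne (j : ℕ) (m + 1) with h | h
        · have : j = Fin.last (m + 1) := by ext; simpa using h
          simp [this, Fin.val_last, h]
        · have : j ≠ Fin.last (m + 1) := by
            intro hh; exact h (by simp [hh])
          have hj : (j : ℕ) < m + 1 := by
            have := j.isLt; omega
          simp only [if_neg this, Fin.val_last]
          rcases eq_or_ne (j : ℕ) m with h2 | h2
          · simp [h2]
          · have h3 : (j : ℕ) + 1 < m + 1 := by omega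
            simp only [if_pos h3, if_neg h2, if_neg (by omega : ¬ (j:ℕ) = m + 1)]
      set jm : Fin (m + 2) := ⟨m, by omega⟩ with hjm
      have hterm : ∀ j : Fin (m + 2), j ∈ Finset.univ → j ≠ Fin.last (m + 1) ∧ j ≠ jm →
          (-1 : ℝ) ^ ((Fin.last (m + 1) : ℕ) + (j : ℕ)) * M (Fin.last (m + 1)) j *
            (M.submatrix (Fin.last (m + 1)).succAbove j.succAbove).det = 0 := by
        intro j _ ⟨h1, h2⟩
        have hv1 : (j : ℕ) ≠ m + 1 := fun h => h1 (by ext; simpa using h)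
        have hv2 : (j : ℕ) ≠ m := fun h => h2 (by ext; simpa using h)
        rw [hrow j, if_neg hv1, if_neg hv2, mul_zero, zero_mul]
      have hsum := Finset.sum_eq_add_of_mem (Fin.last (m + 1)) jm
        (Finset.mem_univ _) (Finset.mem_univ _)
        (by intro h; have := congrArg Fin.val h; simp [hjm] at this) hterm
      have hsub1 : M.submatrix (Fin.last (m + 1)).succAbove (Fin.last (m + 1)).succAbove =
          Gmat c g (m + 1) := by
        ext i j
        have hne : (Fin.castSucc j) ≠ Fin.last (m + 1) := by
          intro h; have := congrArg Fin.val h; simp at this; omega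
        simp [Fin.succAbove_last, hM, Matrix.updateCol_apply, hne, Gmat]
      have hsub2 : M.submatrix (Fin.last (m + 1)).succAbove jm.succAbove =
          (Gmat c g (m + 1)).updateCol (Fin.last m) (fun i => φ (i : ℕ)) := by
        ext i j
        rcases lt_or_ge (j : ℕ) m with hj | hj
        · have hcol : jm.succAbove j = Fin.castSucc j := by
            rw [Fin.succAbove]
            rw [if_pos (by simp [Fin.lt_def, hjm]; omega)]
          have hne : (Fin.castSucc j) ≠ Fin.last (m + 1) := by
            intro h; have := congrArg Fin.val h; simp at this; omega
          have hne2 : j ≠ Fin.last m := by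
            intro h; have := congrArg Fin.val h; simp at this; omega
          simp [Fin.succAbove_last, hcol, hM, Matrix.updateCol_apply, hne, hne2, Gmat]
        · have hjl : j = Fin.last m := by ext; have := j.isLt; simp [Fin.val_last]; omega
          subst hjl
          have hcol : jm.succAbove (Fin.last m) = Fin.last (m + 1) := by
            rw [Fin.succAbove]
            rw [if_neg (by simp [Fin.lt_def, hjm])]
            ext; simp [Fin.succ, Fin.val_last]
          simp [Fin.succAbove_last, hcol, hM, Matrix.updateCol_apply]
      have hjmv : (jm : ℕ) = m := rfl
      rw [hexp, hsum, hsub1, hsub2, hrow, hrow, if_pos (by simp [Fin.val_last]),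
        if_neg (by rw [hjmv]; omega), if_pos hjmv, ih φ]
      have hsign1 : ((-1 : ℝ)) ^ ((Fin.last (m + 1) : ℕ) + ((Fin.last (m + 1)) : ℕ)) = 1 := by
        rw [Fin.val_last]; exact Even.neg_one_pow ⟨m + 1, by ring⟩
      have hsign2 : ((-1 : ℝ)) ^ ((Fin.last (m + 1) : ℕ) + (jm : ℕ)) = -1 := by
        rw [Fin.val_last, hjmv]; exact Odd.neg_one_pow ⟨m, by ring⟩
      rw [hsign1, hsign2]
      have hstep : ∀ k ∈ Finset.range (m + 1),
          φ k * (Gmat c g k).det * ∏ j ∈ Finset.Ico k (m + 1), c j =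
          c m * (φ k * (Gmat c g k).det * ∏ j ∈ Finset.Ico k m, c j) := by
        intro k hk
        rw [Finset.prod_Ico_succ_top (by simpa using Nat.lt_succ_iff.mp (Finset.mem_range.mp hk))]
        ring
      conv_rhs => rw [Finset.sum_range_succ, Finset.sum_congr rfl hstep, ← Finset.mul_sum]
      simp only [Finset.Ico_self, Finset.prod_empty]
      ring

lemma Gmat_det_succ (c : ℕ → ℝ) (g : ℕ → ℕ → ℝ) (m : ℕ) :
    (Gmat c g (m + 1)).det =
      ∑ k ∈ Finset.range (m + 1),
        g k (m + 1) * (Gmat c g k).det * ∏ j ∈ Finset.Ico k m, c j := by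
  have h : Gmat c g (m + 1) =
      (Gmat c g (m + 1)).updateCol (Fin.last m) (fun i => g (i : ℕ) (m + 1)) := by
    ext i j
    rw [Matrix.updateCol_apply]
    split_ifs with h
    · subst h
      have hi := i.isLt
      simp only [Gmat, Matrix.of_apply, Fin.val_last]
      rw [if_neg (by omega), if_neg (by omega)]
    · rfl
  rw [h]
  exact Gmat_det_update c g m (fun k => g k (m + 1))

noncomputable def Lmat (m : ℕ) : Matrix (Fin m) (Fin m) ℝ :=
  Matrix.of fun i j => if i ≤ j then 1 else 0

lemma Lmat_det (m : ℕ) : (Lmat m).det = 1 := by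
  have h : (Lmat m).BlockTriangular id := by
    intro i j hij
    simp only [Lmat, Matrix.of_apply, id] at hij ⊢
    rw [if_neg (by exact fun hle => absurd (lt_of_lt_of_le hij hle) (lt_irrefl _))]
  rw [Matrix.det_of_upperTriangular h]
  simp [Lmat]

section Bridge

variable {T : Set Word} {U : Word → Word → ℝ}

lemma aux_mul_L (hT : IsTree T) (hM : IsTransMatrix T U) (hA : IsAUD T U)
    {u : Word} (hu : u ∈ T) :
    hMat T U u * Lmat u.length =
      Gmat (fun j => U (u.take (j + 1)) (u.take j))
        (fun i j => descWeight T U (u.take i) (u.take j)) u.length := by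
  ext i j
  set F : ℕ → ℝ := fun m => descWeight T U (u.take (i : ℕ)) (u.take m) with hF
  have hstep1 : (hMat T U u * Lmat u.length) i j =
      ∑ k ∈ Finset.range u.length,
        (fun k => ((if (i : ℕ) = k then (1 : ℝ) else 0) -
            (if (i : ℕ) ≤ k + 1 then F k - F (k + 1) else 0)) *
          (if k ≤ (j : ℕ) then 1 else 0)) k := by
    rw [Matrix.mul_apply, ← Fin.sum_univ_eq_sum_range]
    apply Finset.sum_congr rfl
    intro j' _
    simp only [hMat, Lmat, Matrix.of_apply, hF, Fin.ext_iff, Fin.le_def]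
  rw [hstep1]
  have hj1 : (j : ℕ) + 1 ≤ u.length := j.isLt
  rw [← Finset.sum_subset (Finset.range_subset_range.mpr hj1) (by
    intro k hk hk2
    simp only [Finset.mem_range] at hk hk2
    have hkj : ¬ (k ≤ (j : ℕ)) := by omega
    simp [hkj])]
  have hstep2 : ∀ k ∈ Finset.range ((j : ℕ) + 1),
      (fun k => ((if (i : ℕ) = k then (1 : ℝ) else 0) -
            (if (i : ℕ) ≤ k + 1 then F k - F (k + 1) else 0)) *
          (if k ≤ (j : ℕ) then 1 else 0)) k =
      ((if (i : ℕ) = k then (1 : ℝ) else 0) -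
            (if (i : ℕ) ≤ k + 1 then F k - F (k + 1) else 0)) := by
    intro k hk
    simp only [Finset.mem_range] at hk
    have hkj : k ≤ (j : ℕ) := by omega
    simp [hkj]
  rw [Finset.sum_congr rfl hstep2, Finset.sum_sub_distrib, aux_delta, aux_tele]
  have hil := i.isLt
  have hjl := j.isLt
  simp only [Gmat, Matrix.of_apply]
  rcases lt_trichotomy ((j : ℕ) + 1) (i : ℕ) with hc | hc | hc
  · rw [if_neg (show ¬ (i : ℕ) ≤ (j : ℕ) by omega),
      if_neg (show ¬ (i : ℕ) ≤ (j : ℕ) + 1 by omega), if_pos hc]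
    ring
  · have hi1 : 1 ≤ (i : ℕ) := by omega
    have hvT : u.take (i : ℕ) ∈ T := aux_take_mem hT hu _
    have hvne : u.take (i : ℕ) ≠ [] := aux_take_ne_nil hi1 (by omega)
    have hpar : par (u.take (i : ℕ)) = u.take ((i : ℕ) - 1) :=
      aux_par_take hi1 (by omega)
    have h1 : F ((i : ℕ) - 1) = 1 := by
      simp only [hF]
      rw [← hpar]
      exact aux_AL1 hT hM hA hvT hvne
    have h2 : U (u.take (i : ℕ)) (par (u.take (i : ℕ))) + F (i : ℕ) = 1 := by
      have := aux_AL2 hT hM hA hvT hvne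
      simpa [hF] using this
    rw [if_neg (show ¬ (i : ℕ) ≤ (j : ℕ) by omega),
      if_pos (show (i : ℕ) ≤ (j : ℕ) + 1 by omega),
      if_neg (show ¬ (j : ℕ) + 1 < (i : ℕ) by omega), if_pos hc]
    have hji : (j : ℕ) = (i : ℕ) - 1 := by omega
    rw [hc, hji, h1, ← hpar]
    linarith [h2]
  · have h1 : F ((i : ℕ) - 1) = 1 := by
      rcases Nat.eq_zero_or_pos (i : ℕ) with h0 | h0
      · simp only [hF, h0, Nat.zero_sub, List.take_zero]
        exact aux_AL3 hT hM
      · simp only [hF]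
        rw [← aux_par_take h0 (by omega)]
        exact aux_AL1 hT hM hA (aux_take_mem hT hu _) (aux_take_ne_nil h0 (by omega))
    rw [if_pos (show (i : ℕ) ≤ (j : ℕ) by omega),
      if_pos (show (i : ℕ) ≤ (j : ℕ) + 1 by omega),
      if_neg (show ¬ (j : ℕ) + 1 < (i : ℕ) by omega),
      if_neg (show ¬ (j : ℕ) + 1 = (i : ℕ) by omega), h1]
    simp only [hF]
    ring

lemma aux_det_take (hT : IsTree T) (hM : IsTransMatrix T U) (hA : IsAUD T U)
    {u : Word} (hu : u ∈ T) {k : ℕ} (hk : k ≤ u.length) :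
    (hMat T U (u.take k)).det =
      (Gmat (fun j => U (u.take (j + 1)) (u.take j))
        (fun i j => descWeight T U (u.take i) (u.take j)) k).det := by
  have h0 := congrArg Matrix.det (aux_mul_L hT hM hA (aux_take_mem hT hu k))
  rw [Matrix.det_mul, Lmat_det, mul_one] at h0
  have hlen : (u.take k).length = k := by rw [List.length_take]; omega
  have hcast : ∀ (c : ℕ → ℝ) (g : ℕ → ℕ → ℝ) {a b : ℕ}, a = b →
      (Gmat c g a).det = (Gmat c g b).det := by
    rintro c g a b rfl; rfl
  rw [h0, hcast _ _ hlen]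
  congr 1
  ext i j
  have hi := i.isLt
  have hj := j.isLt
  simp only [Gmat, Matrix.of_apply, List.take_take]
  rw [min_eq_left (by omega : (j : ℕ) + 1 ≤ k), min_eq_left (by omega : (j : ℕ) ≤ k),
    min_eq_left (by omega : (i : ℕ) ≤ k)]

end Bridge

theorem hInv_balance (T : Set Word) (hT : IsTree T) (U : Word → Word → ℝ)
    (hM : IsTransMatrix T U) (hA : IsAUD T U) (hI : IrreducibleOn T U) :
    ∀ u ∈ T, u ≠ [] →
      hInv T U u * U u (par u) =
        ∑ k ∈ Finset.range u.length,
          hInv T U (u.take k) * descWeight T U (u.take k) u := by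
  classical
  intro u hu hune
  obtain ⟨m, hm⟩ : ∃ m, u.length = m + 1 :=
    ⟨u.length - 1, by have := List.length_pos_iff.mpr hune; omega⟩
  set c : ℕ → ℝ := fun j => U (u.take (j + 1)) (u.take j) with hcdef
  set g : ℕ → ℕ → ℝ := fun i j => descWeight T U (u.take i) (u.take j) with hgdef
  have hcpos : ∀ j < u.length, 0 < c j := by
    intro j hj
    have h1 : u.take (j + 1) ∈ T := aux_take_mem hT hu _
    have h2 := aux_pos_par hT hA hI h1 (aux_take_ne_nil (by omega) (by omega))
    rw [aux_par_take (by omega) (by omega)] at h2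
    simpa [hcdef] using h2
  have hcne : ∀ j < u.length, c j ≠ 0 := fun j hj => ne_of_gt (hcpos j hj)
  -- determinant of prefixes
  have hD : ∀ k ≤ u.length, (hMat T U (u.take k)).det = (Gmat c g k).det := by
    intro k hk
    exact aux_det_take hT hM hA hu hk
  -- determinant of u itself
  have hDu : (hMat T U u).det = (Gmat c g u.length).det := by
    have h := hD u.length (le_refl _)
    rwa [List.take_length] at h
  -- hInv of prefixes
  have hinvk : ∀ k < u.length, hInv T U (u.take k) =
      (Gmat c g k).det / ∏ j ∈ Finset.range k, c j := by
    intro k hk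
    have hlen : (u.take k).length = k := by rw [List.length_take]; omega
    simp only [hInv]
    rw [hD k (le_of_lt hk)]
    congr 1
    rw [hlen]
    apply Finset.prod_congr rfl
    intro j hj
    simp only [Finset.mem_range] at hj
    rw [List.take_take, List.take_take, min_eq_left (by omega : j + 1 ≤ k),
      min_eq_left (by omega : j ≤ k)]
  -- descWeight of prefixes into T_u
  have hdw : ∀ k : ℕ, descWeight T U (u.take k) u = g k u.length := by
    intro k
    simp only [hgdef]
    rw [List.take_length]
  -- the transition to the parent
  have hUu : U u (par u) = c m := by
    have hparu : par u = u.take m := by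
      rw [par, List.dropLast_eq_take, hm]
      norm_num
    rw [hparu]
    simp only [hcdef]
    rw [← hm, List.take_length]
  -- expansion of the determinant
  have hdetu : (Gmat c g u.length).det =
      ∑ k ∈ Finset.range (m + 1), g k (m + 1) * (Gmat c g k).det *
        ∏ j ∈ Finset.Ico k m, c j := by
    have hcast : ∀ {a b : ℕ}, a = b → (Gmat c g a).det = (Gmat c g b).det := by
      rintro a b rfl; rfl
    rw [hcast hm, Gmat_det_succ]
  -- denominator of hInv u
  have hPu : (∏ k ∈ Finset.range u.length, U (u.take (k + 1)) (u.take k)) =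
      ∏ k ∈ Finset.range (m + 1), c k := by
    rw [hm]
  have hinvu : hInv T U u =
      (∑ k ∈ Finset.range (m + 1), g k (m + 1) * (Gmat c g k).det *
        ∏ j ∈ Finset.Ico k m, c j) / ∏ k ∈ Finset.range (m + 1), c k := by
    simp only [hInv]
    rw [hDu, hdetu, hPu]
  rw [hinvu, hUu, hm]
  rw [div_mul_eq_mul_div, Finset.sum_mul, Finset.sum_div]
  apply Finset.sum_congr rfl
  intro k hk
  have hk' : k < m + 1 := Finset.mem_range.mp hk
  rw [hinvk k (by omega), hdw k, hm]
  have hP : ∏ j ∈ Finset.range (m + 1), c j =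
      (∏ j ∈ Finset.range k, c j) * (∏ j ∈ Finset.Ico k m, c j) * c m := by
    rw [Finset.prod_range_succ, ← Finset.prod_range_mul_prod_Ico c (by omega : k ≤ m)]
  rw [hP]
  have h1 : (∏ j ∈ Finset.range k, c j) ≠ 0 :=
    Finset.prod_ne_zero_iff.mpr (fun j hj => hcne j
      (by have := Finset.mem_range.mp hj; omega))
  have h2 : (∏ j ∈ Finset.Ico k m, c j) ≠ 0 :=
    Finset.prod_ne_zero_iff.mpr (fun j hj => hcne j
      (by have := (Finset.mem_Ico.mp hj).2; omega))
  have h3 : c m ≠ 0 := hcne m (by omega)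
  field_simp
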